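/- In every timestamped execution, for all operations op and op': op' ≺ op holds if and only if app op' < get op (issuer op'). (This is the combinatorial core of the paper's Lemma 3: the set of records visible in the get phase of op consists exactly of the operations that precede op in the order ≺.) -/

import Mathlib

/-- The timestamp of operation `op` at coordinate `j`: the number of operations
issued by `j` that appended before `op` read `j`'s ledger. -/
noncomputable def tstamp {n : ℕ} {Ops : Type} [Fintype Ops]
    (issuer : Ops → Fin n) (get : Ops → Fin n → ℝ) (app : Ops → ℝ)
    (op : Ops) (j : Fin n) : ℕ :=
  Nat.card {op'' : Ops // issuer op'' = j ∧ app op'' < get op j}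

/-- Core of Lemma 3:  iff  appended before  read the ledger
of 's issuer. -/
theorem prec_iff_visible (n : ℕ) (hn : 1 ≤ n) (Ops : Type) [Fintype Ops]
    (issuer : Ops → Fin n) (get : Ops → Fin n → ℝ) (app : Ops → ℝ)
    (hga : ∀ op j, get op j < app op)
    (hseq : ∀ op op' : Ops, op ≠ op' → issuer op = issuer op' →
      (∀ j, app op < get op' j) ∨ (∀ j, app op' < get op j)) :
    ∀ op op' : Ops,
      (tstamp issuer get app op' (issuer op') < tstamp issuer get app op (issuer op')) ↔
        app op' < get op (issuer op') := by
  classical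
  intro op op'
  set j := issuer op' with hj
  have hcard : ∀ o : Ops, tstamp issuer get app o j =
      (Finset.univ.filter fun op'' => issuer op'' = j ∧ app op'' < get o j).card := by
    intro o
    simp [tstamp, Nat.card_eq_fintype_card, Fintype.card_subtype]
  rw [hcard, hcard]
  constructor
  · -- contrapositive
    intro hlt
    by_contra hnot
    push_neg at hnot
    have hsub : (Finset.univ.filter fun op'' => issuer op'' = j ∧ app op'' < get op j) ⊆
        (Finset.univ.filter fun op'' => issuer op'' = j ∧ app op'' < get op' j) := by
      intro x hx
      simp only [Finset.mem_filter, Finset.mem_univ, true_and] at hx ⊢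
      obtain ⟨hxj, hxlt⟩ := hx
      refine ⟨hxj, ?_⟩
      have hxne : x ≠ op' := by
        rintro rfl
        exact absurd (lt_of_lt_of_le hxlt hnot) (lt_irrefl _)
      rcases hseq x op' hxne (by rw [hxj, hj]) with h | h
      · exact h j
      · exact absurd (lt_trans (h j) (lt_trans (hga x j) (lt_of_lt_of_le hxlt hnot)))
          (lt_irrefl _)
    exact absurd (Finset.card_le_card hsub) (not_le.mpr hlt)
  · intro hlt
    apply Finset.card_lt_card
    constructor
    · intro x hx
      simp only [Finset.mem_filter, Finset.mem_univ, true_and] at hx ⊢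
      obtain ⟨hxj, hxlt⟩ := hx
      refine ⟨hxj, ?_⟩
      have hxne : x ≠ op' := by
        rintro rfl
        exact absurd (lt_trans hxlt (hga _ j)) (lt_irrefl _)
      rcases hseq x op' hxne (by rw [hxj, hj]) with h | h
      · exact lt_trans (lt_trans (h j) (hga op' j)) hlt
      · exact absurd (lt_trans (lt_trans (h j) (lt_trans (hga x j) hxlt)) (hga op' j))
          (lt_irrefl _)
    · intro hsub
      have := hsub (Finset.mem_filter.mpr ⟨Finset.mem_univ op', rfl, hlt⟩)
      simp only [Finset.mem_filter, Finset.mem_univ, true_and] at this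
      exact absurd (lt_trans this.2 (hga op' j)) (lt_irrefl _)
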